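/- With a*(ṡ) = (−ṡ + sqrt(ṡ² + 4K))/2, K = λ·M > 0 (λ, M > 0), the optimal value satisfies L(ṡ) = M·ℓ(λ/a*(ṡ)) + λ·ℓ(a*(ṡ)/λ), where ℓ(x) = x log x − x + 1 and L(ṡ) = inf{λℓ(a/λ) + Mℓ(b/M) : a,b ≥ 0, b − a = ṡ}. -/
import Mathlib


noncomputable def ell (x : ℝ) : ℝ := x * Real.log x - x + 1

noncomputable def Lfun (lam M : ℝ) (sd : ℝ) : ℝ :=
  sInf {x : ℝ | ∃ a b : ℝ, 0 ≤ a ∧ 0 ≤ b ∧ sd = b - a ∧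
    x = lam * ell (a / lam) + M * ell (b / M)}

lemma ell_tangent {x y : ℝ} (hx : 0 ≤ x) (hy : 0 < y) :
    ell y + Real.log y * (x - y) ≤ ell x := by
  rcases eq_or_lt_of_le hx with h | hx
  · simp [ell, ← h]
    nlinarith [hy]
  · have h1 : Real.log (y / x) ≤ y / x - 1 := Real.log_le_sub_one_of_pos (by positivity)
    have h2 : Real.log (y / x) = Real.log y - Real.log x := Real.log_div hy.ne' hx.ne'
    have h3 : x * (y / x - 1) = y - x := by field_simp
    have h4 := mul_le_mul_of_nonneg_left h1 hx.le
    simp only [ell]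
    nlinarith [h4]

/-- With `a*(ṡ) = (−ṡ + √(ṡ² + 4K))/2`, `K = λM > 0`, the optimal value satisfies
`L(ṡ) = M·ℓ(λ/a*) + λ·ℓ(a*/λ)`. -/
theorem Lfun_eq (lam M sd : ℝ) (hlam : 0 < lam) (hM : 0 < M) :
    let K := lam * M
    let astar := (-sd + Real.sqrt (sd ^ 2 + 4 * K)) / 2
    Lfun lam M sd = M * ell (lam / astar) + lam * ell (astar / lam) := by
  intro K astar
  have hK : 0 < K := mul_pos hlam hM
  set s := Real.sqrt (sd ^ 2 + 4 * K) with hs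
  have hsq : s ^ 2 = sd ^ 2 + 4 * K := Real.sq_sqrt (by nlinarith)
  have habs : |sd| < s := by
    rw [← Real.sqrt_sq_eq_abs, hs]
    exact Real.sqrt_lt_sqrt (sq_nonneg sd) (by nlinarith)
  have ha : 0 < astar := by
    have := neg_abs_le sd
    have := le_abs_self sd
    simp only [astar]
    linarith [habs]
  set bstar := astar + sd with hb
  have hbpos : 0 < bstar := by
    have := neg_abs_le sd
    simp only [bstar, astar]
    linarith [habs]
  have hK' : K = lam * M := rfl
  have ha' : astar = (-sd + s) / 2 := rfl
  have hb' : bstar = (-sd + s) / 2 + sd := by rw [hb, ha']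
  have hab : astar * bstar = K := by
    rw [ha', hb', hK']
    linear_combination hsq / 4
  have hlb : lam / astar = bstar / M := by
    field_simp
    linear_combination - hab - hK'
  have hlog : Real.log (astar / lam) + Real.log (bstar / M) = 0 := by
    rw [← Real.log_mul (by positivity) (by positivity)]
    have : astar / lam * (bstar / M) = 1 := by
      field_simp
      linear_combination hab + hK'
    rw [this, Real.log_one]
  have hne : (M * ell (lam / astar) + lam * ell (astar / lam)) ∈
      {x : ℝ | ∃ a b : ℝ, 0 ≤ a ∧ 0 ≤ b ∧ sd = b - a ∧
        x = lam * ell (a / lam) + M * ell (b / M)} := by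
    exact ⟨astar, bstar, ha.le, hbpos.le, by simp [bstar], by rw [hlb]; ring⟩
  have hlow : ∀ x ∈ {x : ℝ | ∃ a b : ℝ, 0 ≤ a ∧ 0 ≤ b ∧ sd = b - a ∧
      x = lam * ell (a / lam) + M * ell (b / M)},
      M * ell (lam / astar) + lam * ell (astar / lam) ≤ x := by
    rintro x ⟨a, b, ha0, hb0, hsd, rfl⟩
    have t1 : ell (astar / lam) + Real.log (astar / lam) * (a / lam - astar / lam)
        ≤ ell (a / lam) := ell_tangent (by positivity) (by positivity)
    have t2 : ell (bstar / M) + Real.log (bstar / M) * (b / M - bstar / M)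
        ≤ ell (b / M) := ell_tangent (by positivity) (by positivity)
    have e1 : lam * (Real.log (astar / lam) * (a / lam - astar / lam))
        = Real.log (astar / lam) * (a - astar) := by field_simp
    have e2 : M * (Real.log (bstar / M) * (b / M - bstar / M))
        = Real.log (bstar / M) * (b - bstar) := by field_simp
    have hdiff : a - astar = b - bstar := by
      simp only [bstar] at *; linarith
    have hsum : Real.log (astar / lam) * (a - astar) + Real.log (bstar / M) * (b - bstar)
        = 0 := by
      rw [← hdiff]
      have : Real.log (astar / lam) * (a - astar) + Real.log (bstar / M) * (a - astar)
          = (Real.log (astar / lam) + Real.log (bstar / M)) * (a - astar) := by ring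
      rw [this, hlog, zero_mul]
    rw [hlb]
    nlinarith [mul_le_mul_of_nonneg_left t1 hlam.le, mul_le_mul_of_nonneg_left t2 hM.le]
  apply le_antisymm
  · exact csInf_le ⟨_, hlow⟩ hne
  · exact le_csInf ⟨_, hne⟩ hlow
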